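/- Let k, l ≥ 2 be natural numbers and let M = ⟨a, b | aᵏ = bˡ⟩ be the torus knot monoid. A subset 𝔭 ⊆ M is a prime ideal if and only if 𝔭 = ∅ or 𝔭 = {m ∈ M : m ≠ 1}; in particular M has exactly two prime ideals. -/

import Mathlib

/-- A prime ideal of a (not necessarily commutative) monoid `M`: a two-sided
ideal not containing `1` such that `a * b ∈ 𝔭` implies `a ∈ 𝔭` or `b ∈ 𝔭`. -/
def IsPrimeIdeal {M : Type*} [Monoid M] (𝔭 : Set M) : Prop :=
  (1 : M) ∉ 𝔭 ∧ (∀ m x : M, x ∈ 𝔭 → m * x ∈ 𝔭 ∧ x * m ∈ 𝔭) ∧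
    ∀ a b : M, a * b ∈ 𝔭 → a ∈ 𝔭 ∨ b ∈ 𝔭

/-- The congruence on the free monoid on two generators generated by the single
relation `a ^ k = b ^ l`, where `a = of 0` and `b = of 1`. -/
def torusKnotCon (k l : ℕ) : Con (FreeMonoid (Fin 2)) :=
  conGen fun x y =>
    x = FreeMonoid.of (0 : Fin 2) ^ k ∧ y = FreeMonoid.of (1 : Fin 2) ^ l

/-- The torus knot monoid `⟨a, b | a^k = b^l⟩`. -/
abbrev TorusKnotMonoid (k l : ℕ) := (torusKnotCon k l).Quotient

/-- The weight homomorphism `a ↦ l`, `b ↦ k` on the torus knot monoid. -/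
def tkPhi (k l : ℕ) : TorusKnotMonoid k l →* Multiplicative ℕ :=
  Con.lift _ (FreeMonoid.lift fun i => Multiplicative.ofAdd (if i = 0 then l else k))
    (Con.conGen_le.mpr (by
      rintro x y ⟨rfl, rfl⟩
      show _ = _
      rw [map_pow, map_pow, FreeMonoid.lift_eval_of, FreeMonoid.lift_eval_of]
      simp only [if_pos rfl, if_neg (by decide : (1 : Fin 2) ≠ 0)]
      apply Multiplicative.toAdd.injective
      simp [mul_comm]))

lemma tkPhi_free_eq_one (k l : ℕ) (hk : 2 ≤ k) (hl : 2 ≤ l)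
    (w : FreeMonoid (Fin 2))
    (hw : FreeMonoid.lift (fun i : Fin 2 =>
        Multiplicative.ofAdd (if i = 0 then l else k)) w = 1) : w = 1 := by
  induction w using FreeMonoid.recOn with
  | one => rfl
  | of_mul g xs ih =>
    exfalso
    rw [map_mul, FreeMonoid.lift_eval_of] at hw
    have h2 := congrArg Multiplicative.toAdd hw
    simp only [toAdd_mul, toAdd_one, toAdd_ofAdd] at h2
    split at h2 <;> omega

lemma tkPhi_eq_one (k l : ℕ) (hk : 2 ≤ k) (hl : 2 ≤ l)
    (x : TorusKnotMonoid k l) (hx : tkPhi k l x = 1) : x = 1 := by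
  induction x using Con.induction_on with
  | _ w =>
    have hw : FreeMonoid.lift (fun i : Fin 2 =>
        Multiplicative.ofAdd (if i = 0 then l else k)) w = 1 := hx
    rw [tkPhi_free_eq_one k l hk hl w hw]
    rfl

lemma tk_mul_eq_one (k l : ℕ) (hk : 2 ≤ k) (hl : 2 ≤ l)
    {m x : TorusKnotMonoid k l} (h : m * x = 1) : m = 1 ∧ x = 1 := by
  have := congrArg (tkPhi k l) h
  rw [map_mul, map_one] at this
  have h2 := congrArg Multiplicative.toAdd this
  simp only [toAdd_mul, toAdd_one] at h2
  constructor <;>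
    [apply tkPhi_eq_one k l hk hl m; apply tkPhi_eq_one k l hk hl x] <;>
    apply Multiplicative.toAdd.injective <;> simp only [toAdd_one] <;> omega

lemma primeIdeal_pow_mem {M : Type*} [Monoid M] {𝔭 : Set M} (hP : IsPrimeIdeal 𝔭)
    {x : M} (hx : x ∈ 𝔭) (n : ℕ) (hn : n ≠ 0) : x ^ n ∈ 𝔭 := by
  induction n with
  | zero => exact absurd rfl hn
  | succ n ih =>
    rcases Nat.eq_zero_or_pos n with rfl | hn'
    · simpa using hx
    · rw [pow_succ]
      exact (hP.2.1 x _ (ih hn'.ne')).2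

lemma primeIdeal_mem_of_pow_mem {M : Type*} [Monoid M] {𝔭 : Set M} (hP : IsPrimeIdeal 𝔭)
    {x : M} {n : ℕ} (hx : x ^ n ∈ 𝔭) : x ∈ 𝔭 := by
  induction n with
  | zero => exact absurd (by simpa using hx) hP.1
  | succ n ih =>
    rw [pow_succ] at hx
    rcases hP.2.2 _ _ hx with h | h
    · exact ih h
    · exact h

/-- For `k, l ≥ 2`, the torus knot monoid `M = ⟨a, b | a^k = b^l⟩` has exactly
two prime ideals: the empty set and `M - {1}`. -/
theorem torusKnotMonoid_primeIdeals (k l : ℕ) (hk : 2 ≤ k) (hl : 2 ≤ l)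
    (𝔭 : Set (TorusKnotMonoid k l)) :
    IsPrimeIdeal 𝔭 ↔ 𝔭 = ∅ ∨ 𝔭 = {m : TorusKnotMonoid k l | m ≠ 1} := by
  have hrel : ((FreeMonoid.of (0 : Fin 2) : FreeMonoid (Fin 2)) : TorusKnotMonoid k l) ^ k
      = ((FreeMonoid.of (1 : Fin 2) : FreeMonoid (Fin 2)) : TorusKnotMonoid k l) ^ l := by
    have : ((FreeMonoid.of (0 : Fin 2) ^ k : FreeMonoid (Fin 2)) : TorusKnotMonoid k l)
        = ((FreeMonoid.of (1 : Fin 2) ^ l : FreeMonoid (Fin 2)) : TorusKnotMonoid k l) :=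
      (Con.eq _).mpr (ConGen.Rel.of _ _ ⟨rfl, rfl⟩)
    have hp : ∀ (x : FreeMonoid (Fin 2)) (n : ℕ),
        ((x ^ n : FreeMonoid (Fin 2)) : TorusKnotMonoid k l)
          = (x : TorusKnotMonoid k l) ^ n := fun x n =>
      (map_pow (Con.mk' (torusKnotCon k l)) x n : _)
    rw [← hp, ← hp]
    exact this
  constructor
  · intro hP
    by_cases hE : 𝔭 = ∅
    · exact Or.inl hE
    · right
      obtain ⟨x, hx⟩ := Set.nonempty_iff_ne_empty.mpr hE
      -- Step 1: some generator lies in 𝔭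
      have hgen : ∃ g : Fin 2, ((FreeMonoid.of g : FreeMonoid (Fin 2)) : TorusKnotMonoid k l) ∈ 𝔭 := by
        induction x using Con.induction_on with
        | _ w =>
          induction w using FreeMonoid.recOn with
          | one => exact absurd hx hP.1
          | of_mul g xs ih =>
            have : ((FreeMonoid.of g : FreeMonoid (Fin 2)) : TorusKnotMonoid k l)
                * ((xs : FreeMonoid (Fin 2)) : TorusKnotMonoid k l) ∈ 𝔭 := hx
            rcases hP.2.2 _ _ this with h | h
            · exact ⟨g, h⟩
            · exact ih h
      -- Step 2: both generators lie in 𝔭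
      have hboth : ∀ g : Fin 2,
          ((FreeMonoid.of g : FreeMonoid (Fin 2)) : TorusKnotMonoid k l) ∈ 𝔭 := by
        obtain ⟨g, hg⟩ := hgen
        have key : ∀ g' : Fin 2,
            ((FreeMonoid.of g' : FreeMonoid (Fin 2)) : TorusKnotMonoid k l) ∈ 𝔭 → ∀ g'' : Fin 2,
            ((FreeMonoid.of g'' : FreeMonoid (Fin 2)) : TorusKnotMonoid k l) ∈ 𝔭 := by
          intro g' hg' g''
          fin_cases g' <;> fin_cases g''
          · exact hg'
          · exact primeIdeal_mem_of_pow_mem hP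
              (hrel ▸ primeIdeal_pow_mem hP hg' k (by omega))
          · exact primeIdeal_mem_of_pow_mem hP
              (hrel ▸ primeIdeal_pow_mem hP hg' l (by omega))
          · exact hg'
        exact key g hg
      -- Step 3: conclude 𝔭 = M \ {1}
      ext m
      simp only [Set.mem_setOf_eq]
      constructor
      · rintro hm rfl
        exact hP.1 hm
      · intro hm
        induction m using Con.induction_on with
        | _ w =>
          induction w using FreeMonoid.recOn with
          | one => exact absurd rfl hm
          | of_mul g xs _ =>
            have : ((FreeMonoid.of g * xs : FreeMonoid (Fin 2)) : TorusKnotMonoid k l)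
                = ((FreeMonoid.of g : FreeMonoid (Fin 2)) : TorusKnotMonoid k l)
                * ((xs : FreeMonoid (Fin 2)) : TorusKnotMonoid k l) := rfl
            rw [this]
            exact (hP.2.1 _ _ (hboth g)).2
  · rintro (rfl | rfl)
    · exact ⟨Set.notMem_empty 1, fun m x hx => absurd hx (Set.notMem_empty x),
        fun a b hab => absurd hab (Set.notMem_empty _)⟩
    · refine ⟨by simp, ?_, ?_⟩
      · intro m x hx
        simp only [Set.mem_setOf_eq] at hx ⊢
        constructor
        · intro h
          exact hx (tk_mul_eq_one k l hk hl h).2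
        · intro h
          exact hx (tk_mul_eq_one k l hk hl h).1
      · intro a b hab
        simp only [Set.mem_setOf_eq] at hab ⊢
        by_contra hc
        push_neg at hc
        rw [hc.1, hc.2, one_mul] at hab
        exact hab rfl
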